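/- Let 0 < γ₁ ≤ 1 ≤ γ₂. Let z₁, z₂ > 0, let x₁, x₂ be points of a Euclidean space E and y₁, y₂ points of a Euclidean space E', and suppose γ₁·‖x₁ − x₂‖ ≤ ‖y₁ − y₂‖ ≤ γ₂·‖x₁ − x₂‖. Then γ₁·d_H((z₁,x₁),(z₂,x₂)) ≤ d_H((z₁,y₁),(z₂,y₂)) ≤ γ₂·d_H((z₁,x₁),(z₂,x₂)), where d_H((z,x),(z',x')) = arcosh(1 + (‖x − x'‖² + (z − z')²)/(2·z·z')). -/

import Mathlib

/-- The inverse hyperbolic cosine. -/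
noncomputable def arcosh (x : ℝ) : ℝ := Real.log (x + Real.sqrt (x ^ 2 - 1))

lemma sinh_mul_ge (γ : ℝ) (hγ : 1 ≤ γ) {u : ℝ} (hu : 0 ≤ u) :
    γ * Real.sinh u ≤ Real.sinh (γ * u) := by
  have h : MonotoneOn (fun u : ℝ => Real.sinh (γ * u) - γ * Real.sinh u) (Set.Ici 0) := by
    apply monotoneOn_of_deriv_nonneg (convex_Ici 0)
    · fun_prop
    · fun_prop
    · intro x hx
      have hx0 : (0:ℝ) ≤ x := le_of_lt (by simpa using hx)
      have hd : HasDerivAt (fun u : ℝ => Real.sinh (γ * u) - γ * Real.sinh u)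
          (Real.cosh (γ * x) * γ - γ * Real.cosh x) x := by
        have h1 : HasDerivAt (fun u : ℝ => Real.sinh (γ * u)) (Real.cosh (γ * x) * γ) x := by
          have := (Real.hasDerivAt_sinh (γ * x)).comp x
            ((hasDerivAt_id x).const_mul γ)
          exact this.congr_deriv (by ring)
        exact h1.sub ((Real.hasDerivAt_sinh x).const_mul γ)
      rw [hd.deriv]
      have : Real.cosh x ≤ Real.cosh (γ * x) := by
        rw [Real.cosh_le_cosh]
        rw [abs_of_nonneg hx0, abs_of_nonneg (by positivity)]
        nlinarith
      nlinarith [this]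
  have := h (Set.mem_Ici.2 le_rfl) (Set.mem_Ici.2 hu) hu
  simp only [mul_zero, Real.sinh_zero, sub_zero] at this
  linarith

lemma cosh_mul_ge (γ : ℝ) (hγ : 1 ≤ γ) {s : ℝ} (hs : 0 ≤ s) :
    1 + γ ^ 2 * (Real.cosh s - 1) ≤ Real.cosh (γ * s) := by
  have key : ∀ x : ℝ, Real.cosh x = 1 + 2 * Real.sinh (x / 2) ^ 2 := by
    intro x
    have := Real.cosh_two_mul (x / 2)
    have h2 := Real.cosh_sq (x / 2)
    rw [show 2 * (x / 2) = x by ring] at this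
    rw [this, h2]; ring
  rw [key s, key (γ * s)]
  have h1 : γ * Real.sinh (s / 2) ≤ Real.sinh (γ * s / 2) := by
    have := sinh_mul_ge γ hγ (u := s / 2) (by linarith)
    rw [show γ * (s / 2) = γ * s / 2 by ring] at this
    exact this
  have h2 : 0 ≤ γ * Real.sinh (s / 2) := by
    have := Real.sinh_nonneg_iff.2 (show (0:ℝ) ≤ s / 2 by linarith)
    positivity
  nlinarith [sq_nonneg (Real.sinh (s/2))]

lemma cosh_arcosh {x : ℝ} (hx : 1 ≤ x) : Real.cosh (arcosh x) = x := by
  have hsq : (0:ℝ) ≤ x ^ 2 - 1 := by nlinarith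
  have hy : 0 < x + Real.sqrt (x ^ 2 - 1) := by positivity
  have hinv : (x + Real.sqrt (x ^ 2 - 1)) * (x - Real.sqrt (x ^ 2 - 1)) = 1 := by
    have := Real.sq_sqrt hsq
    nlinarith
  rw [arcosh, Real.cosh_eq, Real.exp_log hy, Real.exp_neg, Real.exp_log hy]
  have : (x + Real.sqrt (x ^ 2 - 1))⁻¹ = x - Real.sqrt (x ^ 2 - 1) := by
    field_simp
    nlinarith [Real.sq_sqrt hsq]
  rw [this]; ring

lemma arcosh_nonneg {x : ℝ} (hx : 1 ≤ x) : 0 ≤ arcosh x := by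
  apply Real.log_nonneg
  have : (0:ℝ) ≤ Real.sqrt (x ^ 2 - 1) := Real.sqrt_nonneg _
  linarith

lemma arcosh_cosh {s : ℝ} (hs : 0 ≤ s) : arcosh (Real.cosh s) = s := by
  have h1 : Real.cosh s ^ 2 - 1 = Real.sinh s ^ 2 := by
    have := Real.cosh_sq s; linarith
  rw [arcosh, h1, Real.sqrt_sq (Real.sinh_nonneg_iff.2 hs), Real.cosh_add_sinh,
    Real.log_exp]

lemma arcosh_le_arcosh {a b : ℝ} (ha : 1 ≤ a) (hab : a ≤ b) : arcosh a ≤ arcosh b := by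
  apply Real.log_le_log (by positivity)
  have : Real.sqrt (a ^ 2 - 1) ≤ Real.sqrt (b ^ 2 - 1) := by
    apply Real.sqrt_le_sqrt; nlinarith
  linarith

lemma arcosh_key (γ : ℝ) (hγ : 1 ≤ γ) {t : ℝ} (ht : 0 ≤ t) :
    arcosh (1 + γ ^ 2 * t) ≤ γ * arcosh (1 + t) := by
  set s := arcosh (1 + t) with hs
  have hs0 : 0 ≤ s := arcosh_nonneg (by linarith)
  have hcs : Real.cosh s = 1 + t := cosh_arcosh (by linarith)
  have h1 : 1 + γ ^ 2 * t ≤ Real.cosh (γ * s) := by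
    have := cosh_mul_ge γ hγ hs0
    rw [hcs] at this; simpa using this
  calc arcosh (1 + γ ^ 2 * t) ≤ arcosh (Real.cosh (γ * s)) :=
        arcosh_le_arcosh (by nlinarith) h1
    _ = γ * s := arcosh_cosh (by positivity)

/-- The hyperbolic distance, in the Poincaré half-space model, between points
`(z, x)` and `(z', x')` with heights `z, z' > 0`. -/
noncomputable def dH {E : Type*} [NormedAddCommGroup E] (z : ℝ) (x : E) (z' : ℝ) (x' : E) : ℝ :=
  arcosh (1 + (‖x - x'‖ ^ 2 + (z - z') ^ 2) / (2 * z * z'))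

/-- Pointwise form of Theorem 3.2: if the horizontal coordinates are stretched by
factors between `γ₁` and `γ₂` and the heights are unchanged, then the hyperbolic
distances are stretched by factors between `γ₁` and `γ₂`. -/
theorem hyperbolic_stretch_transfer
    {E : Type*} [NormedAddCommGroup E] [InnerProductSpace ℝ E] [FiniteDimensional ℝ E]
    {E' : Type*} [NormedAddCommGroup E'] [InnerProductSpace ℝ E'] [FiniteDimensional ℝ E']
    (γ₁ γ₂ : ℝ) (hγ₁ : 0 < γ₁) (hγ₁1 : γ₁ ≤ 1) (hγ₂ : 1 ≤ γ₂)
    (z₁ z₂ : ℝ) (hz₁ : 0 < z₁) (hz₂ : 0 < z₂)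
    (x₁ x₂ : E) (y₁ y₂ : E')
    (hlow : γ₁ * ‖x₁ - x₂‖ ≤ ‖y₁ - y₂‖) (hhigh : ‖y₁ - y₂‖ ≤ γ₂ * ‖x₁ - x₂‖) :
    γ₁ * dH z₁ x₁ z₂ x₂ ≤ dH z₁ y₁ z₂ y₂ ∧ dH z₁ y₁ z₂ y₂ ≤ γ₂ * dH z₁ x₁ z₂ x₂ := by
  set A := ‖x₁ - x₂‖ with hA
  set B := ‖y₁ - y₂‖ with hB
  have hA0 : 0 ≤ A := norm_nonneg _
  have hB0 : 0 ≤ B := norm_nonneg _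
  have hsq1 : γ₁ ^ 2 * A ^ 2 ≤ B ^ 2 := by
    nlinarith [pow_le_pow_left₀ (by positivity : (0:ℝ) ≤ γ₁ * A) hlow 2]
  have hsq2 : B ^ 2 ≤ γ₂ ^ 2 * A ^ 2 := by
    nlinarith [pow_le_pow_left₀ hB0 hhigh 2]
  have hc : 0 < 2 * z₁ * z₂ := by positivity
  set h := (z₁ - z₂) ^ 2 with hh
  have hh0 : 0 ≤ h := sq_nonneg _
  set t := (A ^ 2 + h) / (2 * z₁ * z₂) with ht
  set t' := (B ^ 2 + h) / (2 * z₁ * z₂) with ht'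
  have ht0 : 0 ≤ t := by positivity
  have ht'0 : 0 ≤ t' := by positivity
  have hdx : dH z₁ x₁ z₂ x₂ = arcosh (1 + t) := rfl
  have hdy : dH z₁ y₁ z₂ y₂ = arcosh (1 + t') := rfl
  clear_value A B h t t'
  constructor
  · -- lower bound
    have hlt : γ₁ ^ 2 * t ≤ t' := by
      rw [ht, ht', ← mul_div_assoc, div_le_div_iff₀ hc hc]
      have hnum : γ₁ ^ 2 * (A ^ 2 + h) ≤ B ^ 2 + h := by
        nlinarith [mul_nonneg (by nlinarith : (0:ℝ) ≤ 1 - γ₁ ^ 2) hh0]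
      exact mul_le_mul_of_nonneg_right hnum hc.le
    have key := arcosh_key γ₁⁻¹ (one_le_inv_iff₀.2 ⟨hγ₁, hγ₁1⟩) (t := γ₁ ^ 2 * t)
      (by positivity)
    have hsimp : (γ₁⁻¹) ^ 2 * (γ₁ ^ 2 * t) = t := by
      field_simp
    rw [hsimp] at key
    have h2 : arcosh (1 + γ₁ ^ 2 * t) ≤ arcosh (1 + t') :=
      arcosh_le_arcosh (by nlinarith) (by linarith)
    rw [hdx, hdy]
    calc γ₁ * arcosh (1 + t) ≤ γ₁ * (γ₁⁻¹ * arcosh (1 + γ₁ ^ 2 * t)) := by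
          apply mul_le_mul_of_nonneg_left key (le_of_lt hγ₁)
      _ = arcosh (1 + γ₁ ^ 2 * t) := by field_simp
      _ ≤ arcosh (1 + t') := h2
  · -- upper bound
    have hlt : t' ≤ γ₂ ^ 2 * t := by
      rw [ht, ht', ← mul_div_assoc, div_le_div_iff₀ hc hc]
      have hnum : B ^ 2 + h ≤ γ₂ ^ 2 * (A ^ 2 + h) := by
        nlinarith [mul_nonneg (by nlinarith : (0:ℝ) ≤ γ₂ ^ 2 - 1) hh0]
      exact mul_le_mul_of_nonneg_right hnum hc.le
    rw [hdx, hdy]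
    calc arcosh (1 + t') ≤ arcosh (1 + γ₂ ^ 2 * t) :=
          arcosh_le_arcosh (by linarith) (by linarith)
      _ ≤ γ₂ * arcosh (1 + t) := arcosh_key γ₂ hγ₂ ht0
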